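/- Let G be a k-uniform hypergraph (k ≥ 2) on vertex set C ⊔ D with |C| = s, let R be an s×s matrix and Q = R ⊕ I_{|D|}. Suppose that for each subset A ⊆ D with |A| ≤ k, the link of A in C (the (k−|A|)-uniform hypergraph on C with edges {f ⊆ C : |f| = k−|A|, f ∪ A ∈ E(G)}) has adjacency tensor L^A satisfying Rᵀ L^A R = M^A where M^A is the adjacency tensor of a (k−|A|)-uniform hypergraph t(L^A) on C, and that every edge of G is of the form f ∪ A for such f ⊆ C and A ⊆ D. Define H on C ⊔ D by E(H) = ⋃_{A ⊆ D} { f ∪ A : f ∈ E(t(L^A)) }. Then Qᵀ A_G Q = A_H. -/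
import Mathlib


open scoped Classical

/-- The Shao conjugation `Qᵀ A Q` of an order-`r` tensor `A` on index type `V`:
`(Qᵀ A Q)_{i} = Σ_{j} a_{j} q_{j_1 i_1} ⋯ q_{j_r i_r}`. -/
noncomputable def tconj {V : Type*} [Fintype V] {r : ℕ}
    (Q : Matrix V V ℂ) (A : (Fin r → V) → ℂ) : (Fin r → V) → ℂ :=
  fun i => ∑ j : Fin r → V, A j * ∏ t : Fin r, Q (j t) (i t)

/-- The order-`r` adjacency tensor of a hypergraph with edge set `E`:
entry `1` on tuples of distinct indices forming an edge, `0` elsewhere. -/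
noncomputable def adjTensor {V : Type*} [Fintype V] [DecidableEq V]
    (E : Finset (Finset V)) {r : ℕ} : (Fin r → V) → ℂ :=
  fun j => if Function.Injective j ∧ Finset.image j Finset.univ ∈ E then 1 else 0

/-- The embedding `C = Fin s ↪ Fin s ⊕ Fin d`. -/
def inlEmb (s d : ℕ) : Fin s ↪ Fin s ⊕ Fin d := ⟨Sum.inl, Sum.inl_injective⟩

/-- The embedding `D = Fin d ↪ Fin s ⊕ Fin d`. -/
def inrEmb (s d : ℕ) : Fin d ↪ Fin s ⊕ Fin d := ⟨Sum.inr, Sum.inr_injective⟩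

/-- Edge set of the link of `A ⊆ D` in `C`: the `(k−|A|)`-sets `f ⊆ C` with
`f ∪ A ∈ E(G)`. -/
noncomputable def linkE {s d : ℕ} (E : Finset (Finset (Fin s ⊕ Fin d))) (k : ℕ)
    (A : Finset (Fin d)) : Finset (Finset (Fin s)) :=
  Finset.univ.filter fun f =>
    f.card = k - A.card ∧ f.map (inlEmb s d) ∪ A.map (inrEmb s d) ∈ E

section Aux

variable {s d k : ℕ}

/-- The set of `D`-coordinates appearing in an index tuple. -/
noncomputable def auxA (i : Fin k → Fin s ⊕ Fin d) : Finset (Fin d) :=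
  (Finset.univ.image i).preimage Sum.inr Sum.inr_injective.injOn

/-- The positions of the tuple landing in `C`. -/
abbrev auxP (i : Fin k → Fin s ⊕ Fin d) : Type := {t : Fin k // (i t).isLeft}

/-- Tuple equal to `i` on `D`-positions and to `g` (via `inl`) on `C`-positions. -/
noncomputable def auxJ (i : Fin k → Fin s ⊕ Fin d) (g : auxP i → Fin s) :
    Fin k → Fin s ⊕ Fin d :=
  fun t => if h : (i t).isLeft then Sum.inl (g ⟨t, h⟩) else i t

/-- The `C`-part of the tuple `i`. -/
noncomputable def auxa (i : Fin k → Fin s ⊕ Fin d) (t : auxP i) : Fin s :=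
  (i t.1).getLeft t.2

lemma inl_getLeft (x : Fin s ⊕ Fin d) (h : x.isLeft) : Sum.inl (x.getLeft h) = x := by
  cases x with
  | inl a => rfl
  | inr b => simp at h

lemma auxJ_auxa (i : Fin k → Fin s ⊕ Fin d) : auxJ i (auxa i) = i := by
  funext t
  unfold auxJ
  split
  · exact inl_getLeft _ _
  · rfl

lemma preimage_union_inl (f : Finset (Fin s)) (A : Finset (Fin d)) :
    (f.map (inlEmb s d) ∪ A.map (inrEmb s d)).preimage Sum.inl
      Sum.inl_injective.injOn = f := by
  ext x
  simp [inlEmb, inrEmb, Finset.mem_preimage]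

lemma preimage_union_inr (f : Finset (Fin s)) (A : Finset (Fin d)) :
    (f.map (inlEmb s d) ∪ A.map (inrEmb s d)).preimage Sum.inr
      Sum.inr_injective.injOn = A := by
  ext x
  simp [inlEmb, inrEmb, Finset.mem_preimage]

lemma decomp_unique {f f' : Finset (Fin s)} {A A' : Finset (Fin d)}
    (h : f.map (inlEmb s d) ∪ A.map (inrEmb s d)
       = f'.map (inlEmb s d) ∪ A'.map (inrEmb s d)) : f = f' ∧ A = A' := by
  constructor
  · rw [← preimage_union_inl f A, h, preimage_union_inl]
  · rw [← preimage_union_inr f A, h, preimage_union_inr]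

lemma auxJ_image (i : Fin k → Fin s ⊕ Fin d) (g : auxP i → Fin s) :
    Finset.image (auxJ i g) Finset.univ
      = (Finset.image g Finset.univ).map (inlEmb s d)
        ∪ (auxA i).map (inrEmb s d) := by
  ext x
  simp only [Finset.mem_image, Finset.mem_union, Finset.mem_map, inlEmb, inrEmb,
    Function.Embedding.coeFn_mk, Finset.mem_univ, true_and, auxA, Finset.mem_preimage,
    auxJ]
  constructor
  · rintro ⟨t, rfl⟩
    by_cases h : (i t).isLeft
    · left
      exact ⟨g ⟨t, h⟩, ⟨⟨t, h⟩, rfl⟩, by simp [h]⟩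
    · right
      rcases Sum.isRight_iff.mp (Sum.not_isLeft.mp h) with ⟨b, hb⟩
      refine ⟨b, ?_, by simp [h, hb]⟩
      exact ⟨t, hb⟩
  · rintro (⟨y, ⟨⟨t, ht⟩, rfl⟩, rfl⟩ | ⟨b, ⟨t, ht⟩, rfl⟩)
    · exact ⟨t, by simp [ht]⟩
    · refine ⟨t, ?_⟩
      have h : ¬ (i t).isLeft := by rw [ht]; simp
      simp [h, ht]

lemma auxJ_inj_iff (i : Fin k → Fin s ⊕ Fin d)
    (hinj : ∀ t₁ t₂ : Fin k, ¬(i t₁).isLeft → ¬(i t₂).isLeft → i t₁ = i t₂ → t₁ = t₂)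
    (g : auxP i → Fin s) :
    Function.Injective (auxJ i g) ↔ Function.Injective g := by
  constructor
  · intro hJ t₁ t₂ h
    have : auxJ i g t₁.1 = auxJ i g t₂.1 := by
      unfold auxJ
      rw [dif_pos t₁.2, dif_pos t₂.2]
      show Sum.inl (g t₁) = Sum.inl (g t₂)
      rw [h]
    exact Subtype.ext (hJ this)
  · intro hg t₁ t₂ h
    unfold auxJ at h
    by_cases h₁ : (i t₁).isLeft <;> by_cases h₂ : (i t₂).isLeft
    · rw [dif_pos h₁, dif_pos h₂] at h
      exact congrArg Subtype.val (hg (Sum.inl_injective h))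
    · rw [dif_pos h₁, dif_neg h₂] at h
      exact absurd (by rw [← h]; simp) h₂
    · rw [dif_neg h₁, dif_pos h₂] at h
      exact absurd (by rw [h]; simp) h₁
    · rw [dif_neg h₁, dif_neg h₂] at h
      exact hinj t₁ t₂ h₁ h₂ h

lemma auxA_card (i : Fin k → Fin s ⊕ Fin d)
    (hinj : ∀ t₁ t₂ : Fin k, ¬(i t₁).isLeft → ¬(i t₂).isLeft → i t₁ = i t₂ → t₁ = t₂) :
    (auxA i).card = (Finset.univ.filter fun t => ¬ (i t).isLeft).card := by
  symm
  apply Finset.card_bij (fun t ht => (i t).getRight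
    (Sum.not_isLeft.mp (Finset.mem_filter.mp ht).2))
  · intro t ht
    simp only [auxA, Finset.mem_preimage, Finset.mem_image]
    exact ⟨t, Finset.mem_univ t, (Sum.inr_getRight _ _).symm⟩
  · intro t₁ h₁ t₂ h₂ heq
    have h₁' := Sum.not_isLeft.mp (Finset.mem_filter.mp h₁).2
    have h₂' := Sum.not_isLeft.mp (Finset.mem_filter.mp h₂).2
    apply hinj t₁ t₂ (Finset.mem_filter.mp h₁).2 (Finset.mem_filter.mp h₂).2
    rw [← Sum.inr_getRight _ h₁', ← Sum.inr_getRight _ h₂', heq]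
  · intro b hb
    simp only [auxA, Finset.mem_preimage, Finset.mem_image] at hb
    obtain ⟨t, -, ht⟩ := hb
    have h : ¬ (i t).isLeft := by rw [ht]; simp
    refine ⟨t, Finset.mem_filter.mpr ⟨Finset.mem_univ t, h⟩, ?_⟩
    have h2 := Sum.inr_getRight (i t) (Sum.not_isLeft.mp h)
    exact Sum.inr_injective (h2.trans ht)

lemma card_auxP (i : Fin k → Fin s ⊕ Fin d)
    (hinj : ∀ t₁ t₂ : Fin k, ¬(i t₁).isLeft → ¬(i t₂).isLeft → i t₁ = i t₂ → t₁ = t₂) :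
    Fintype.card (auxP i) = k - (auxA i).card := by
  have h1 : Fintype.card (auxP i)
      = (Finset.univ.filter fun t => (i t).isLeft).card := by
    unfold auxP
    rw [Fintype.card_subtype]
  have h2 : (Finset.univ.filter fun t => (i t).isLeft).card
      + (Finset.univ.filter fun t => ¬ (i t).isLeft).card = k := by
    have h3 := Finset.card_filter_add_card_filter_not
      (s := (Finset.univ : Finset (Fin k))) (p := fun t => (i t).isLeft)
    simpa using h3
  rw [auxA_card i hinj, h1]
  omega

end Aux

/-- Main switching theorem: let `G` be a `k`-uniform hypergraph on `C ⊔ D` with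
`|C| = s`, `R` an `s×s` matrix and `Q = R ⊕ I`. Suppose for every `A ⊆ D` with
`|A| ≤ k` the adjacency tensor `L^A` of the link of `A` in `C` satisfies
`Rᵀ L^A R = adjacency tensor of a (k−|A|)-uniform hypergraph t(L^A) = T A` on `C`.
Define `H` by `E(H) = ⋃_{A ⊆ D} { f ∪ A : f ∈ T A }`. Then `Qᵀ A_G Q = A_H`. -/
theorem main_switching {s d k : ℕ} (hk : 2 ≤ k)
    (E : Finset (Finset (Fin s ⊕ Fin d))) (hE : ∀ e ∈ E, e.card = k)
    (R : Matrix (Fin s) (Fin s) ℂ)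
    (T : Finset (Fin d) → Finset (Finset (Fin s)))
    (hT : ∀ A : Finset (Fin d), ∀ f ∈ T A, f.card = k - A.card)
    (hconj : ∀ A : Finset (Fin d), A.card ≤ k →
      tconj R (adjTensor (linkE E k A) (r := k - A.card)) = adjTensor (T A))
    (EH : Finset (Finset (Fin s ⊕ Fin d)))
    (hEH : EH = Finset.univ.filter fun e => ∃ A : Finset (Fin d), ∃ f ∈ T A,
      e = f.map (inlEmb s d) ∪ A.map (inrEmb s d)) :
    tconj (Matrix.fromBlocks R 0 0 (1 : Matrix (Fin d) (Fin d) ℂ))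
        (adjTensor E (r := k)) =
      adjTensor EH (r := k) := by
  funext i
  set Q : Matrix (Fin s ⊕ Fin d) (Fin s ⊕ Fin d) ℂ :=
    Matrix.fromBlocks R 0 0 (1 : Matrix (Fin d) (Fin d) ℂ) with hQ
  show (∑ j : Fin k → Fin s ⊕ Fin d,
      adjTensor E j * ∏ t : Fin k, Q (j t) (i t)) = adjTensor EH i
  -- Step 1: reindex the sum over tuples supported correctly
  have hJinj : Function.Injective (auxJ i) := by
    intro g₁ g₂ h
    funext t
    have := congrFun h t.1
    unfold auxJ at this
    rw [dif_pos t.2, dif_pos t.2] at this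
    exact Sum.inl_injective this
  have key : (∑ j : Fin k → Fin s ⊕ Fin d,
        adjTensor E j * ∏ t : Fin k, Q (j t) (i t))
      = ∑ g : auxP i → Fin s,
        adjTensor E (auxJ i g) * ∏ t : auxP i, R (g t) (auxa i t) := by
    have h1 : ∀ g : auxP i → Fin s,
        (∏ t : Fin k, Q (auxJ i g t) (i t)) = ∏ t : auxP i, R (g t) (auxa i t) := by
      intro g
      rw [← Finset.prod_filter_mul_prod_filter_not Finset.univ (fun t => (i t).isLeft)]
      have hnot : (∏ t ∈ Finset.univ.filter fun t => ¬ (i t).isLeft,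
          Q (auxJ i g t) (i t)) = 1 := by
        apply Finset.prod_eq_one
        intro t ht
        have h := (Finset.mem_filter.mp ht).2
        rcases Sum.isRight_iff.mp (Sum.not_isLeft.mp h) with ⟨b, hb⟩
        rw [auxJ, dif_neg h, hb, hQ]
        simp
      rw [hnot, mul_one]
      rw [Finset.prod_subtype (Finset.univ.filter fun t => (i t).isLeft)
        (p := fun t => (i t).isLeft) (by simp)]
      apply Finset.prod_congr rfl
      intro t _
      simp only [auxJ]
      rw [dif_pos t.2, ← inl_getLeft (i t.1) t.2, hQ]
      show R (g ⟨t.1, t.2⟩) ((i t.1).getLeft t.2) = R (g t) (auxa i t)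
      rfl
    have h0 : (∑ j : Fin k → Fin s ⊕ Fin d,
          adjTensor E j * ∏ t : Fin k, Q (j t) (i t))
        = ∑ j ∈ Finset.univ.image (auxJ i),
            adjTensor E j * ∏ t : Fin k, Q (j t) (i t) := by
      symm
      apply Finset.sum_subset (Finset.subset_univ _)
      intro j _ hj
      have hz : ∃ t, Q (j t) (i t) = 0 := by
        by_contra hc
        push_neg at hc
        apply hj
        have hgood : ∀ t, (¬(i t).isLeft → j t = i t) ∧
            ((i t).isLeft → (j t).isLeft) := by
          intro t
          have hct := hc t
          rcases hx : i t with a | b <;> rcases hy : j t with a' | b' <;>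
            rw [hx, hy] at hct
          · exact ⟨fun h => by simp at h, fun _ => rfl⟩
          · exact absurd (by rw [hQ]; simp) hct
          · exact absurd (by rw [hQ]; simp) hct
          · have hbb : b' = b := by
              by_contra hne
              exact hct (by rw [hQ]; simp [Matrix.one_apply, hne])
            exact ⟨fun _ => by rw [hbb], fun h => by simp at h⟩
        refine Finset.mem_image.mpr
          ⟨fun t => (j t.1).getLeft ((hgood t.1).2 t.2), Finset.mem_univ _, ?_⟩
        funext t
        simp only [auxJ]
        split
        · next h => exact inl_getLeft (j t) ((hgood t).2 h)
        · next h => exact ((hgood t).1 h).symm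
      obtain ⟨t, ht⟩ := hz
      rw [Finset.prod_eq_zero (Finset.mem_univ t) ht, mul_zero]
    rw [h0, Finset.sum_image (fun g _ g' _ h => hJinj h)]
    exact Finset.sum_congr rfl fun g _ => by rw [h1 g]
  rw [key]
  -- Step 2: case on injectivity of `i` on the `D`-positions
  by_cases hinj : ∀ t₁ t₂ : Fin k, ¬(i t₁).isLeft → ¬(i t₂).isLeft →
      i t₁ = i t₂ → t₁ = t₂
  · -- main case
    have hA := card_auxP i hinj
    have hAle : (auxA i).card ≤ k := by
      rw [auxA_card i hinj]
      calc (Finset.univ.filter fun t => ¬ (i t).isLeft).card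
          ≤ (Finset.univ : Finset (Fin k)).card := Finset.card_filter_le _ _
        _ = k := by simp
    let e : Fin (k - (auxA i).card) ≃ auxP i := (Fintype.equivFinOfCardEq hA).symm
    let i' : Fin (k - (auxA i).card) → Fin s := fun t => auxa i (e t)
    have himg : ∀ g : auxP i → Fin s,
        Finset.image (fun t' => g (e t')) Finset.univ = Finset.image g Finset.univ := by
      intro g
      ext x
      simp only [Finset.mem_image, Finset.mem_univ, true_and]
      exact ⟨fun ⟨t', h⟩ => ⟨e t', h⟩, fun ⟨t, h⟩ => ⟨e.symm t, by simpa using h⟩⟩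
    have hadj : ∀ g : auxP i → Fin s, adjTensor E (auxJ i g)
        = adjTensor (linkE E k (auxA i)) (fun t' => g (e t')) := by
      intro g
      rw [adjTensor, adjTensor]
      refine if_congr ?_ rfl rfl
      have hgi : Function.Injective (fun t' => g (e t')) ↔ Function.Injective g :=
        Equiv.injective_comp e g
      constructor
      · rintro ⟨h1, h2⟩
        have hg : Function.Injective g := (auxJ_inj_iff i hinj g).mp h1
        refine ⟨hgi.mpr hg, ?_⟩
        rw [linkE, Finset.mem_filter]
        refine ⟨Finset.mem_univ _, ?_, ?_⟩
        · rw [himg g, Finset.card_image_of_injective _ hg, Finset.card_univ, hA]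
        · rw [himg g, ← auxJ_image]
          exact h2
      · rintro ⟨h1, h2⟩
        have hg : Function.Injective g := hgi.mp h1
        refine ⟨(auxJ_inj_iff i hinj g).mpr hg, ?_⟩
        rw [linkE, Finset.mem_filter] at h2
        rw [auxJ_image, ← himg g]
        exact h2.2.2
    have reindex : (∑ g : auxP i → Fin s,
          adjTensor E (auxJ i g) * ∏ t : auxP i, R (g t) (auxa i t))
        = ∑ j' : Fin (k - (auxA i).card) → Fin s,
          adjTensor (linkE E k (auxA i)) j'
            * ∏ t' : Fin (k - (auxA i).card), R (j' t') (i' t') := by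
      apply Fintype.sum_equiv (Equiv.arrowCongr e.symm (Equiv.refl (Fin s)))
      intro g
      have hprod : (∏ t : auxP i, R (g t) (auxa i t))
          = ∏ t' : Fin (k - (auxA i).card), R (g (e t')) (i' t') :=
        (Fintype.prod_equiv e (fun t' => R (g (e t')) (i' t'))
          (fun t => R (g t) (auxa i t)) (fun t' => rfl)).symm
      rw [hadj g, hprod]
      rfl
    rw [reindex]
    have hc2 := congrFun (hconj (auxA i) hAle) i'
    simp only [tconj] at hc2
    rw [hc2]
    -- Step 3: match the two adjacency tensors
    rw [adjTensor, adjTensor]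
    have hii : auxJ i (auxa i) = i := auxJ_auxa i
    have himg2 : Finset.image i' Finset.univ
        = Finset.image (auxa i) Finset.univ := himg (auxa i)
    have hdecomp : Finset.image i Finset.univ
        = (Finset.image (auxa i) Finset.univ).map (inlEmb s d)
          ∪ (auxA i).map (inrEmb s d) := by
      conv_lhs => rw [← hii]
      exact auxJ_image i (auxa i)
    refine if_congr ?_ rfl rfl
    have hai : Function.Injective i' ↔ Function.Injective (auxa i) :=
      Equiv.injective_comp e (auxa i)
    constructor
    · rintro ⟨h1, h2⟩
      have ha : Function.Injective (auxa i) := hai.mp h1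
      refine ⟨?_, ?_⟩
      · rw [← hii]
        exact (auxJ_inj_iff i hinj (auxa i)).mpr ha
      · rw [hEH, Finset.mem_filter]
        refine ⟨Finset.mem_univ _, auxA i, Finset.image (auxa i) Finset.univ,
          ?_, hdecomp⟩
        rw [← himg2]
        exact h2
    · rintro ⟨h1, h2⟩
      have ha : Function.Injective (auxa i) := by
        rw [← hii] at h1
        exact (auxJ_inj_iff i hinj (auxa i)).mp h1
      refine ⟨hai.mpr ha, ?_⟩
      rw [hEH, Finset.mem_filter] at h2
      obtain ⟨-, A', f', hf', hdec⟩ := h2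
      obtain ⟨hf, hA'⟩ := decomp_unique (hdecomp.symm.trans hdec)
      rw [himg2, hf, hA']
      exact hf'
  · -- degenerate case: both sides vanish
    push_neg at hinj
    obtain ⟨t₁, t₂, h₁, h₂, heq, hne⟩ := hinj
    have hL : ∀ g : auxP i → Fin s, adjTensor E (auxJ i g) = 0 := by
      intro g
      rw [adjTensor, if_neg]
      rintro ⟨hJi, -⟩
      apply hne
      apply hJi
      unfold auxJ
      rw [dif_neg h₁, dif_neg h₂, heq]
    have hR : adjTensor EH i = 0 := by
      rw [adjTensor, if_neg]
      rintro ⟨hi, -⟩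
      exact hne (hi heq)
    rw [hR]
    simp [hL]
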